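/- Let (R_{α,n}) be an A_r Q-system solution. Then for every 1 ≤ α ≤ r+1 and every n ∈ ℤ, R_{α,n} equals the determinant of the α×α matrix whose (i,j) entry is R_{1, n+i+j−α−1} (indices 1 ≤ i, j ≤ α). -/

import Mathlib

open Matrix Finset

section Dodgson

variable {K : Type*} [CommRing K]

/-- Determinant of the identity matrix with two columns replaced. -/
lemma det_update_two {n : Type*} [DecidableEq n] [Fintype n]
    (i j : n) (hij : i ≠ j) (c d : n → K) :
    (((1 : Matrix n n K).updateCol i c).updateCol j d).det
      = c i * d j - c j * d i := by
  classical
  set A := ((1 : Matrix n n K).updateCol i c).updateCol j d with hA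
  have hentry : ∀ p q, A p q =
      if q = j then d p else if q = i then c p else if p = q then 1 else 0 := by
    intro p q
    simp [hA, Matrix.updateCol_apply, Matrix.one_apply]
  rw [Matrix.det_apply]
  have hne : (1 : Equiv.Perm n) ≠ Equiv.swap i j := by
    intro h
    exact hij (Equiv.swap_eq_one_iff.mp h.symm)
  refine (Finset.sum_eq_add_of_mem (1 : Equiv.Perm n) (Equiv.swap i j)
      (Finset.mem_univ _) (Finset.mem_univ _) hne ?_).trans ?_
  · rintro σ - ⟨h1, h2⟩
    obtain ⟨k, hki, hkj, hk⟩ : ∃ k, k ≠ i ∧ k ≠ j ∧ σ k ≠ k := by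
      by_contra hcon
      push_neg at hcon
      have fix : ∀ k, k ≠ i → k ≠ j → σ k = k := fun k h h' => hcon k h h'
      have hσi : σ i = i ∨ σ i = j := by
        by_contra h
        push_neg at h
        exact h.1 (σ.injective (fix (σ i) h.1 h.2))
      rcases hσi with hii | hij'
      · have hσj : σ j = j := by
          by_contra h
          have hji : σ j ≠ i := fun e => hij (σ.injective (e.trans hii.symm)).symm
          exact h (σ.injective (fix (σ j) hji h))
        refine h1 (Equiv.ext fun k => ?_)
        rcases eq_or_ne k i with rfl | hki
        · exact hii
        rcases eq_or_ne k j with rfl | hkj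
        · exact hσj
        · exact fix k hki hkj
      · have hσj : σ j = i := by
          have h' : σ j ≠ j := fun e => hij (σ.injective (hij'.trans e.symm))
          by_contra h
          exact h' (σ.injective (fix (σ j) h h'))
        refine h2 (Equiv.ext fun k => ?_)
        rcases eq_or_ne k i with rfl | hki
        · rw [Equiv.swap_apply_left]; exact hij'
        rcases eq_or_ne k j with rfl | hkj
        · rw [Equiv.swap_apply_right]; exact hσj
        · rw [Equiv.swap_apply_of_ne_of_ne hki hkj]; exact fix k hki hkj
    have hzero : ∏ k, A (σ k) k = 0 := by
      refine Finset.prod_eq_zero (Finset.mem_univ k) ?_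
      rw [hentry]
      simp [hki, hkj, hk]
    rw [hzero, smul_zero]
  · have h1 : ∏ k, A ((1 : Equiv.Perm n) k) k = c i * d j := by
      refine (Finset.prod_eq_mul_of_mem i j (Finset.mem_univ _) (Finset.mem_univ _) hij ?_).trans ?_
      · rintro k - ⟨hk_i, hk_j⟩
        simp only [Equiv.Perm.one_apply]
        rw [hentry]
        simp [hk_i, hk_j]
      · simp only [Equiv.Perm.one_apply]
        rw [hentry i i, hentry j j]
        simp [hij]
    have h2 : ∏ k, A (Equiv.swap i j k) k = c j * d i := by
      refine (Finset.prod_eq_mul_of_mem i j (Finset.mem_univ _) (Finset.mem_univ _) hij ?_).trans ?_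
      · rintro k - ⟨hk_i, hk_j⟩
        rw [Equiv.swap_apply_of_ne_of_ne hk_i hk_j, hentry]
        simp [hk_i, hk_j]
      · rw [Equiv.swap_apply_left, Equiv.swap_apply_right, hentry j i, hentry i j]
        simp [hij, Ne.symm hij]
    rw [h1, h2, Equiv.Perm.sign_one, Equiv.Perm.sign_swap hij, one_smul]
    have : (-1 : ℤˣ) • (c j * d i) = -(c j * d i) := by
      simp
    rw [this]
    ring

/-- Determinant after replacing a column by a standard basis vector. -/
lemma det_updateCol_single {m : ℕ} (A : Matrix (Fin (m + 1)) (Fin (m + 1)) K)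
    (p : Fin (m + 1)) :
    (A.updateCol p (Pi.single p 1)).det
      = (A.submatrix p.succAbove p.succAbove).det := by
  have h : A.updateCol p (Pi.single p 1) = (Aᵀ.updateRow p (Pi.single p 1))ᵀ := by
    rw [Matrix.updateRow_transpose, Matrix.transpose_transpose]
  rw [h, Matrix.det_transpose, ← Matrix.adjugate_apply,
    Matrix.adjugate_fin_succ_eq_det_submatrix]
  rw [show Aᵀ.submatrix p.succAbove p.succAbove = (A.submatrix p.succAbove p.succAbove)ᵀ by
    rw [Matrix.transpose_submatrix]]
  rw [Matrix.det_transpose, Even.neg_one_pow ⟨p, rfl⟩, one_mul]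

lemma updateCol_comm' {n : Type*} [DecidableEq n] (M : Matrix n n K) {i j : n}
    (hij : i ≠ j) (c d : n → K) :
    (M.updateCol i c).updateCol j d = (M.updateCol j d).updateCol i c := by
  ext p q
  simp only [Matrix.updateCol_apply]
  rcases eq_or_ne q j with rfl | h1 <;> rcases eq_or_ne q i with rfl | h2 <;> simp_all

/-- The key algebraic identity (Jacobi/Dodgson, before cancellation). -/
lemma dodgson_key {m : ℕ} (M : Matrix (Fin (m + 2)) (Fin (m + 2)) K) :
    M.det * ((M.submatrix Fin.succ Fin.succ).det *
        (M.submatrix Fin.castSucc Fin.castSucc).det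
      - (M.submatrix Fin.succ Fin.castSucc).det *
        (M.submatrix Fin.castSucc Fin.succ).det)
    = M.det ^ 2 *
        (M.submatrix (Fin.castSucc ∘ Fin.succ) (Fin.castSucc ∘ Fin.succ)).det := by
  classical
  have h0l : (0 : Fin (m + 2)) ≠ Fin.last (m + 1) := by
    simp [Fin.ext_iff]
  set c : Fin (m + 2) → K := fun k => M.adjugate k 0 with hc
  set d : Fin (m + 2) → K := fun k => M.adjugate k (Fin.last (m + 1)) with hd
  set N := ((1 : Matrix (Fin (m + 2)) (Fin (m + 2)) K).updateCol 0 c).updateCol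
      (Fin.last (m + 1)) d with hN
  have hadj : M * M.adjugate = M.det • (1 : Matrix (Fin (m + 2)) (Fin (m + 2)) K) :=
    Matrix.mul_adjugate M
  have hMN : M * N =
      (M.updateCol 0 (M.det • (Pi.single (0 : Fin (m + 2)) (1 : K) : Fin (m + 2) → K))).updateCol
        (Fin.last (m + 1)) (M.det • (Pi.single (Fin.last (m + 1)) (1 : K) : Fin (m + 2) → K)) := by
    ext p q
    by_cases hq1 : q = Fin.last (m + 1)
    · subst hq1
      have h1 : (M * N) p (Fin.last (m + 1)) = (M * M.adjugate) p (Fin.last (m + 1)) := by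
        rw [Matrix.mul_apply, Matrix.mul_apply]
        refine Finset.sum_congr rfl fun x _ => ?_
        simp [hN, Matrix.updateCol_apply, hd]
      rw [h1, hadj]
      simp [Matrix.updateCol_apply, Matrix.one_apply, Pi.single_apply]
    · by_cases hq0 : q = 0
      · subst hq0
        have h1 : (M * N) p 0 = (M * M.adjugate) p 0 := by
          rw [Matrix.mul_apply, Matrix.mul_apply]
          refine Finset.sum_congr rfl fun x _ => ?_
          simp [hN, Matrix.updateCol_apply, hc, h0l]
        rw [h1, hadj]
        simp [Matrix.updateCol_apply, Matrix.one_apply, Pi.single_apply, h0l,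
          Ne.symm h0l]
      · have h1 : (M * N) p q = (M * (1 : Matrix (Fin (m + 2)) (Fin (m + 2)) K)) p q := by
          rw [Matrix.mul_apply, Matrix.mul_apply]
          refine Finset.sum_congr rfl fun x _ => ?_
          simp [hN, Matrix.updateCol_apply, hq1, hq0]
        rw [h1, Matrix.mul_one]
        simp [Matrix.updateCol_apply, hq1, hq0]
  have hdetMN : (M * N).det = M.det ^ 2 *
      ((M.updateCol 0 (Pi.single (0 : Fin (m + 2)) (1 : K))).updateCol
        (Fin.last (m + 1)) (Pi.single (Fin.last (m + 1)) (1 : K))).det := by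
    rw [hMN, Matrix.det_updateCol_smul]
    rw [updateCol_comm' _ h0l, Matrix.det_updateCol_smul,
      updateCol_comm' _ (Ne.symm h0l)]
    ring
  have hupdet : ((M.updateCol 0 (Pi.single (0 : Fin (m + 2)) (1 : K))).updateCol
        (Fin.last (m + 1)) (Pi.single (Fin.last (m + 1)) (1 : K))).det
      = (M.submatrix (Fin.castSucc ∘ Fin.succ) (Fin.castSucc ∘ Fin.succ)).det := by
    rw [det_updateCol_single]
    have hsub : (M.updateCol 0 (Pi.single (0 : Fin (m + 2)) (1 : K))).submatrix
          (Fin.last (m + 1)).succAbove (Fin.last (m + 1)).succAbove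
        = (M.submatrix Fin.castSucc Fin.castSucc).updateCol 0
            (Pi.single (0 : Fin (m + 1)) (1 : K)) := by
      ext a b
      simp only [Fin.succAbove_last, Matrix.submatrix_apply, Matrix.updateCol_apply,
        Pi.single_apply]
      by_cases hb : b = 0
      · subst hb
        simp [Fin.castSucc_eq_zero_iff]
      · have : Fin.castSucc b ≠ 0 := by
          simpa [Fin.castSucc_eq_zero_iff] using hb
        simp [hb, this]
    rw [hsub, det_updateCol_single, Fin.succAbove_zero, Matrix.submatrix_submatrix]
  have hdetN : N.det =
      (M.submatrix Fin.succ Fin.succ).det * (M.submatrix Fin.castSucc Fin.castSucc).det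
      - (M.submatrix Fin.succ Fin.castSucc).det *
        (M.submatrix Fin.castSucc Fin.succ).det := by
    rw [hN, det_update_two 0 (Fin.last (m + 1)) h0l c d]
    have hc0 : c 0 = (M.submatrix Fin.succ Fin.succ).det := by
      show M.adjugate 0 0 = _
      rw [Matrix.adjugate_fin_succ_eq_det_submatrix]
      simp
    have hdl : d (Fin.last (m + 1)) = (M.submatrix Fin.castSucc Fin.castSucc).det := by
      show M.adjugate (Fin.last (m + 1)) (Fin.last (m + 1)) = _
      rw [Matrix.adjugate_fin_succ_eq_det_submatrix]
      rw [Even.neg_one_pow ⟨(Fin.last (m + 1) : ℕ), rfl⟩, one_mul, Fin.succAbove_last]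
    have hcl : c (Fin.last (m + 1)) =
        (-1 : K) ^ (m + 1) * (M.submatrix Fin.succ Fin.castSucc).det := by
      show M.adjugate (Fin.last (m + 1)) 0 = _
      rw [Matrix.adjugate_fin_succ_eq_det_submatrix]
      simp [Fin.succAbove_last]
    have hd0 : d 0 = (-1 : K) ^ (m + 1) * (M.submatrix Fin.castSucc Fin.succ).det := by
      show M.adjugate 0 (Fin.last (m + 1)) = _
      rw [Matrix.adjugate_fin_succ_eq_det_submatrix]
      simp [Fin.succAbove_last]
    rw [hc0, hdl, hcl, hd0]
    have hs : ((-1 : K) ^ (m + 1)) * ((-1 : K) ^ (m + 1)) = 1 := by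
      rw [← pow_add]
      exact Even.neg_one_pow ⟨m + 1, rfl⟩
    linear_combination (-(M.submatrix Fin.succ Fin.castSucc).det *
      (M.submatrix Fin.castSucc Fin.succ).det) * hs
  calc M.det * ((M.submatrix Fin.succ Fin.succ).det *
        (M.submatrix Fin.castSucc Fin.castSucc).det
      - (M.submatrix Fin.succ Fin.castSucc).det *
        (M.submatrix Fin.castSucc Fin.succ).det)
      = M.det * N.det := by rw [hdetN]
    _ = (M * N).det := (Matrix.det_mul M N).symm
    _ = M.det ^ 2 *
        (M.submatrix (Fin.castSucc ∘ Fin.succ) (Fin.castSucc ∘ Fin.succ)).det := by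
        rw [hdetMN, hupdet]

/-- Dodgson condensation / Desnanot–Jacobi identity. -/
lemma dodgson {m : ℕ} (M : Matrix (Fin (m + 2)) (Fin (m + 2)) K) :
    (M.submatrix Fin.succ Fin.succ).det * (M.submatrix Fin.castSucc Fin.castSucc).det
      - (M.submatrix Fin.succ Fin.castSucc).det * (M.submatrix Fin.castSucc Fin.succ).det
    = M.det * (M.submatrix (Fin.castSucc ∘ Fin.succ) (Fin.castSucc ∘ Fin.succ)).det := by
  classical
  set P := MvPolynomial (Fin (m + 2) × Fin (m + 2)) ℤ with hP
  set G : Matrix (Fin (m + 2)) (Fin (m + 2)) P :=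
    Matrix.of fun i j => MvPolynomial.X (i, j) with hG
  have hGdet : G.det ≠ 0 := by
    intro h
    have h2 := congrArg (MvPolynomial.eval
      (fun p : Fin (m + 2) × Fin (m + 2) => if p.1 = p.2 then (1 : ℤ) else 0)) h
    rw [map_zero] at h2
    rw [RingHom.map_det] at h2
    have hone : (MvPolynomial.eval
        (fun p : Fin (m + 2) × Fin (m + 2) => if p.1 = p.2 then (1 : ℤ) else 0)).mapMatrix G
        = (1 : Matrix (Fin (m + 2)) (Fin (m + 2)) ℤ) := by
      ext i j
      simp [hG, Matrix.one_apply]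
    rw [hone, Matrix.det_one] at h2
    exact one_ne_zero h2
  have hkeyG := dodgson_key G
  have hcancel : (G.submatrix Fin.succ Fin.succ).det *
        (G.submatrix Fin.castSucc Fin.castSucc).det
      - (G.submatrix Fin.succ Fin.castSucc).det * (G.submatrix Fin.castSucc Fin.succ).det
      = G.det * (G.submatrix (Fin.castSucc ∘ Fin.succ) (Fin.castSucc ∘ Fin.succ)).det := by
    have := hkeyG
    rw [pow_two, mul_assoc] at this
    exact mul_left_cancel₀ hGdet this
  set φ : P →+* K := MvPolynomial.eval₂Hom (Int.castRingHom K) (fun p => M p.1 p.2) with hφ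
  have hmap : ∀ {k : ℕ} (f g : Fin k → Fin (m + 2)),
      φ ((G.submatrix f g).det) = (M.submatrix f g).det := by
    intro k f g
    rw [RingHom.map_det]
    congr 1
    ext i j
    exact MvPolynomial.eval₂Hom_X' _ _ _
  have hmapM : φ G.det = M.det := by
    rw [RingHom.map_det]
    congr 1
    ext i j
    exact MvPolynomial.eval₂Hom_X' _ _ _
  have h := congrArg φ hcancel
  rw [map_sub, _root_.map_mul, _root_.map_mul, _root_.map_mul, hmap, hmap, hmap, hmap, hmapM, hmap] at h
  exact h

end Dodgson

/-- for an A_r Q-system solution,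
R_{α,n} = det_{1≤i,j≤α} (R_{1, n+i+j−α−1}). -/
theorem qsystem_det_formula (r : ℕ) (hr : 1 ≤ r) (R : ℕ → ℤ → ℝ)
    (hpos : ∀ α, α ≤ r + 1 → ∀ n : ℤ, 0 < R α n)
    (hbd0 : ∀ n : ℤ, R 0 n = 1) (hbd1 : ∀ n : ℤ, R (r + 1) n = 1)
    (hQ : ∀ α, 1 ≤ α → α ≤ r → ∀ n : ℤ,
      R α (n + 1) * R α (n - 1) = R α n ^ 2 + R (α + 1) n * R (α - 1) n) :
    ∀ α, 1 ≤ α → α ≤ r + 1 → ∀ n : ℤ,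
      R α n = Matrix.det (Matrix.of fun i j : Fin α =>
        R 1 (n + ((i : ℕ) : ℤ) + ((j : ℕ) : ℤ) + 1 - (α : ℤ))) := by
  set D : ℕ → ℤ → ℝ := fun α n => Matrix.det (Matrix.of fun i j : Fin α =>
    R 1 (n + ((i : ℕ) : ℤ) + ((j : ℕ) : ℤ) + 1 - (α : ℤ))) with hD
  have hDrec : ∀ (k : ℕ) (n : ℤ),
      D (k + 2) n * D k n = D (k + 1) (n + 1) * D (k + 1) (n - 1) - D (k + 1) n ^ 2 := by
    intro k n
    set M : Matrix (Fin (k + 2)) (Fin (k + 2)) ℝ := Matrix.of fun i j : Fin (k + 2) =>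
      R 1 (n + ((i : ℕ) : ℤ) + ((j : ℕ) : ℤ) + 1 - ((k + 2 : ℕ) : ℤ)) with hM
    have h1 : M.submatrix Fin.succ Fin.succ = Matrix.of fun i j : Fin (k + 1) =>
        R 1 ((n + 1) + ((i : ℕ) : ℤ) + ((j : ℕ) : ℤ) + 1 - ((k + 1 : ℕ) : ℤ)) := by
      ext i j
      simp only [hM, Matrix.submatrix_apply, Matrix.of_apply, Fin.val_succ]
      congr 1
      push_cast
      ring
    have h2 : M.submatrix Fin.castSucc Fin.castSucc = Matrix.of fun i j : Fin (k + 1) =>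
        R 1 ((n - 1) + ((i : ℕ) : ℤ) + ((j : ℕ) : ℤ) + 1 - ((k + 1 : ℕ) : ℤ)) := by
      ext i j
      simp only [hM, Matrix.submatrix_apply, Matrix.of_apply, Fin.coe_castSucc]
      congr 1
      push_cast
      ring
    have h3 : M.submatrix Fin.succ Fin.castSucc = Matrix.of fun i j : Fin (k + 1) =>
        R 1 (n + ((i : ℕ) : ℤ) + ((j : ℕ) : ℤ) + 1 - ((k + 1 : ℕ) : ℤ)) := by
      ext i j
      simp only [hM, Matrix.submatrix_apply, Matrix.of_apply, Fin.val_succ, Fin.coe_castSucc]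
      congr 1
      push_cast
      ring
    have h4 : M.submatrix Fin.castSucc Fin.succ = Matrix.of fun i j : Fin (k + 1) =>
        R 1 (n + ((i : ℕ) : ℤ) + ((j : ℕ) : ℤ) + 1 - ((k + 1 : ℕ) : ℤ)) := by
      ext i j
      simp only [hM, Matrix.submatrix_apply, Matrix.of_apply, Fin.val_succ, Fin.coe_castSucc]
      congr 1
      push_cast
      ring
    have h5 : M.submatrix (Fin.castSucc ∘ Fin.succ) (Fin.castSucc ∘ Fin.succ)
        = Matrix.of fun i j : Fin k =>
        R 1 (n + ((i : ℕ) : ℤ) + ((j : ℕ) : ℤ) + 1 - ((k : ℕ) : ℤ)) := by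
      ext i j
      simp only [hM, Matrix.submatrix_apply, Matrix.of_apply, Function.comp_apply,
        Fin.val_succ, Fin.coe_castSucc]
      congr 1
      push_cast
      ring
    have hdodg := dodgson M
    rw [h1, h2, h3, h4, h5] at hdodg
    simp only [hD]
    rw [← hdodg]
    ring
  have hmain : ∀ α : ℕ, α ≤ r + 1 → ∀ n : ℤ, R α n = D α n := by
    intro α
    induction α using Nat.strong_induction_on with
    | _ α ih =>
      rcases α with _ | _ | k
      · intro _ n
        rw [hbd0]
        simp [hD, Matrix.det_fin_zero]
      · intro _ n
        simp [hD, Matrix.det_fin_one]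
      · intro hle n
        have e1 := ih (k + 1) (by omega) (by omega)
        have e0 := ih k (by omega) (by omega)
        have hrec := hDrec k n
        have hq := hQ (k + 1) (by omega) (by omega) n
        have hk : R k n ≠ 0 := ne_of_gt (hpos k (by omega) n)
        have hfin : D (k + 2) n * R k n = R (k + 2) n * R k n := by
          rw [show R k n = D k n from e0 n, hrec, ← e1, ← e1, ← e1]
          rw [show (k + 1 : ℕ) + 1 = k + 2 from rfl] at hq
          rw [show (k + 1 : ℕ) - 1 = k from rfl] at hq
          rw [← e0 n]
          linarith [hq]
        exact (mul_right_cancel₀ hk hfin).symm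
  intro α hα1 hα2 n
  exact hmain α hα2 n
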